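/- Let G be a connected chordal graph, let v₀ ∈ V(G), and let L_j = {v : d(v₀,v) = j}. Then for any i ≥ 1 and any vertex u ∈ L_i, the set N(u) ∩ L_{i−1} induces a clique in G. -/

import Mathlib

/-- A graph is chordal if it has no induced cycle of length at least 4: every cycle all of
whose chords are cycle edges (i.e. an induced cycle) has length at most 3. -/
def IsChordal {V : Type*} (G : SimpleGraph V) : Prop :=
  ∀ (a : V) (c : G.Walk a a), c.IsCycle →
    (∀ u ∈ c.support, ∀ v ∈ c.support, G.Adj u v → s(u, v) ∈ c.edges) →
    c.length ≤ 3

private lemma edge_of_length_one {V : Type*} {G : SimpleGraph V} {x y : V}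
    (q : G.Walk x y) (h : q.length = 1) : s(x, y) ∈ q.edges := by
  cases q with
  | nil => simp at h
  | cons ha q' =>
    have h0 : q'.length = 0 := by simpa using h
    have := SimpleGraph.Walk.eq_of_length_eq_zero h0
    subst this
    simp

private lemma min_walk_induced {V : Type*} {G : SimpleGraph V} {a b : V} (p : G.Walk a b)
    (hmin : ∀ q : G.Walk a b, (∀ z ∈ q.support, z ∈ p.support) → p.length ≤ q.length) :
    ∀ x ∈ p.support, ∀ y ∈ p.support, G.Adj x y → s(x, y) ∈ p.edges := by
  classical
  intro x hx y hy hxy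
  have hspec := p.take_spec hx
  have hlen : (p.takeUntil x hx).length + (p.dropUntil x hx).length = p.length := by
    conv_rhs => rw [← hspec]
    rw [SimpleGraph.Walk.length_append]
  by_cases hy2 : y ∈ (p.dropUntil x hx).support
  · set q2 := p.dropUntil x hx with hq2
    have hq2spec := q2.take_spec hy2
    have hq2len : (q2.takeUntil y hy2).length + (q2.dropUntil y hy2).length = q2.length := by
      conv_rhs => rw [← hq2spec]
      rw [SimpleGraph.Walk.length_append]
    have hr := hmin ((p.takeUntil x hx).append (SimpleGraph.Walk.cons hxy (q2.dropUntil y hy2)))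
      (by
        intro z hz
        rw [SimpleGraph.Walk.mem_support_append_iff] at hz
        rcases hz with hz | hz
        · exact p.support_takeUntil_subset hx hz
        · rw [SimpleGraph.Walk.support_cons] at hz
          rcases List.mem_cons.mp hz with rfl | hz
          · exact hx
          · exact p.support_dropUntil_subset hx (q2.support_dropUntil_subset hy2 hz))
    rw [SimpleGraph.Walk.length_append, SimpleGraph.Walk.length_cons] at hr
    have hle : (q2.takeUntil y hy2).length ≤ 1 := by omega
    interval_cases h1 : (q2.takeUntil y hy2).length
    · exact absurd (SimpleGraph.Walk.eq_of_length_eq_zero h1) hxy.ne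
    · exact p.edges_dropUntil_subset hx
        (q2.edges_takeUntil_subset hy2 (edge_of_length_one _ h1))
  · have hy1 : y ∈ (p.takeUntil x hx).support := by
      have := hy
      rw [← hspec, SimpleGraph.Walk.mem_support_append_iff] at this
      tauto
    set q1 := p.takeUntil x hx with hq1
    have hq1spec := q1.take_spec hy1
    have hq1len : (q1.takeUntil y hy1).length + (q1.dropUntil y hy1).length = q1.length := by
      conv_rhs => rw [← hq1spec]
      rw [SimpleGraph.Walk.length_append]
    have hr := hmin ((q1.takeUntil y hy1).append
        (SimpleGraph.Walk.cons hxy.symm (p.dropUntil x hx)))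
      (by
        intro z hz
        rw [SimpleGraph.Walk.mem_support_append_iff] at hz
        rcases hz with hz | hz
        · exact p.support_takeUntil_subset hx (q1.support_takeUntil_subset hy1 hz)
        · rw [SimpleGraph.Walk.support_cons] at hz
          rcases List.mem_cons.mp hz with rfl | hz
          · exact p.support_takeUntil_subset hx hy1
          · exact p.support_dropUntil_subset hx hz)
    rw [SimpleGraph.Walk.length_append, SimpleGraph.Walk.length_cons] at hr
    have hle : (q1.dropUntil y hy1).length ≤ 1 := by omega
    interval_cases h1 : (q1.dropUntil y hy1).length
    · exact absurd (SimpleGraph.Walk.eq_of_length_eq_zero h1).symm hxy.ne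
    · have := p.edges_takeUntil_subset hx
        (q1.edges_dropUntil_subset hy1 (edge_of_length_one _ h1))
      rwa [Sym2.eq_swap] at this

/-- In a connected chordal graph, for `u` in the distance layer `L_i` from `v₀`,
the set `N(u) ∩ L_{i-1}` induces a clique. -/
theorem stmt4 {V : Type*} [Fintype V] (G : SimpleGraph V) (hG : G.Connected)
    (hch : IsChordal G) (v₀ : V) (i : ℕ) (hi : 1 ≤ i)
    (u v w : V) (hu : G.dist v₀ u = i)
    (huv : G.Adj u v) (huw : G.Adj u w)
    (hv : G.dist v₀ v = i - 1) (hw : G.dist v₀ w = i - 1) (hvw : v ≠ w) :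
    G.Adj v w := by
  classical
  by_contra hnadj
  -- dispose of the case i = 1
  rcases Nat.lt_or_ge i 2 with hi2 | hi2
  · interval_cases i
    simp only [Nat.sub_self] at hv hw
    exact hvw ((hG.dist_eq_zero_iff.mp hv).symm.trans (hG.dist_eq_zero_iff.mp hw))
  -- the family of walks from v to w staying in low layers
  set Q : V → Prop := fun x => x = v ∨ x = w ∨ G.dist v₀ x ≤ i - 2 with hQ
  -- vertices on a shortest walk from v₀ to a layer-(i-1) vertex are at distance ≤ i-2,
  -- except the endpoint
  have key : ∀ (t : V), G.dist v₀ t = i - 1 → ∀ (q : G.Walk v₀ t), q.length = i - 1 →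
      ∀ x ∈ q.support, x = t ∨ G.dist v₀ x ≤ i - 2 := by
    intro t ht q hq x hxq
    by_cases hxt : x = t
    · exact Or.inl hxt
    right
    have h1 : G.dist v₀ x ≤ (q.takeUntil x hxq).length := SimpleGraph.dist_le _
    have h2 : G.dist x t ≤ (q.dropUntil x hxq).length := SimpleGraph.dist_le _
    have h3 : (q.takeUntil x hxq).length + (q.dropUntil x hxq).length = q.length := by
      conv_rhs => rw [← q.take_spec hxq]
      rw [SimpleGraph.Walk.length_append]
    have h4 : 0 < G.dist x t := hG.pos_dist_of_ne hxt
    omega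
  obtain ⟨qv, hqv⟩ := hG.exists_walk_length_eq_dist v₀ v
  obtain ⟨qw, hqw⟩ := hG.exists_walk_length_eq_dist v₀ w
  have hfam : ∃ n, ∃ q : G.Walk v w, (∀ x ∈ q.support, Q x) ∧ q.length = n := by
    refine ⟨_, qv.reverse.append qw, ?_, rfl⟩
    intro x hx
    rw [SimpleGraph.Walk.mem_support_append_iff] at hx
    rcases hx with hx | hx
    · rw [SimpleGraph.Walk.support_reverse, List.mem_reverse] at hx
      rcases key v hv qv (hqv.trans hv) x hx with rfl | h
      · exact Or.inl rfl
      · exact Or.inr (Or.inr h)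
    · rcases key w hw qw (hqw.trans hw) x hx with rfl | h
      · exact Or.inr (Or.inl rfl)
      · exact Or.inr (Or.inr h)
  set n := Nat.find hfam with hn
  obtain ⟨q0, hq0Q, hq0len⟩ := Nat.find_spec hfam
  -- replace by its bypass: a path of minimal length
  set p := q0.bypass with hp
  have hpQ : ∀ x ∈ p.support, Q x := fun x hx => hq0Q x (q0.support_bypass_subset hx)
  have hplen : p.length = n := by
    have h1 : p.length ≤ n := hn ▸ hq0len ▸ q0.length_bypass_le
    have h2 : n ≤ p.length := Nat.find_le ⟨p, hpQ, rfl⟩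
    omega
  have hppath : p.IsPath := q0.bypass_isPath
  have hmin : ∀ q : G.Walk v w, (∀ z ∈ q.support, z ∈ p.support) → p.length ≤ q.length := by
    intro q hq
    rw [hplen]
    exact Nat.find_le ⟨q, fun z hz => hpQ z (hq z hz), rfl⟩
  have hind := min_walk_induced p hmin
  -- u is not adjacent to vertices in low layers
  have hadj_low : ∀ x, G.dist v₀ x ≤ i - 2 → ¬ G.Adj u x := by
    intro x hx hadj
    have h1 : G.dist x u = 1 := SimpleGraph.dist_eq_one_iff_adj.mpr hadj.symm
    have h2 := hG.dist_triangle (u := v₀) (v := x) (w := u)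
    omega
  -- u is not on p
  have hQu : ¬ Q u := by
    rintro (rfl | rfl | h)
    · omega
    · omega
    · omega
  have hup : u ∉ p.support := fun h => hQu (hpQ u h)
  -- build the cycle
  set p2 : G.Walk v u := p.append (SimpleGraph.Walk.cons huw.symm SimpleGraph.Walk.nil)
    with hp2
  have hp2supp : p2.support = p.support ++ [u] := by
    rw [hp2, SimpleGraph.Walk.support_append]
    simp
  have hp2edges : p2.edges = p.edges ++ [s(w, u)] := by
    rw [hp2, SimpleGraph.Walk.edges_append]
    simp
  set c : G.Walk u u := SimpleGraph.Walk.cons huv p2 with hc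
  have hcsupp : c.support = u :: (p.support ++ [u]) := by
    rw [hc, SimpleGraph.Walk.support_cons, hp2supp]
  have hcedges : c.edges = s(u, v) :: (p.edges ++ [s(w, u)]) := by
    rw [hc, SimpleGraph.Walk.edges_cons, hp2edges]
  have hcyc : c.IsCycle := by
    rw [hc, SimpleGraph.Walk.cons_isCycle_iff]
    constructor
    · rw [SimpleGraph.Walk.isPath_def, hp2supp]
      rw [List.nodup_append]
      refine ⟨hppath.support_nodup, List.nodup_singleton u, ?_⟩
      intro z hz b hz' hzb
      rw [List.mem_singleton] at hz'
      subst hz'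
      rw [hzb] at hz
      exact hup hz
    · rw [hp2edges, List.mem_append, List.mem_singleton]
      rintro (h | h)
      · exact hup (SimpleGraph.Walk.fst_mem_support_of_mem_edges p h)
      · rw [Sym2.eq_iff] at h
        rcases h with ⟨rfl, rfl⟩ | ⟨h1, h2⟩
        · exact G.irrefl huv
        · exact hvw h2
  -- membership characterization
  have hmem : ∀ x ∈ c.support, x = u ∨ x ∈ p.support := by
    intro x hx
    rw [hcsupp, List.mem_cons, List.mem_append, List.mem_singleton] at hx
    tauto
  -- the cycle is induced
  have hindc : ∀ x ∈ c.support, ∀ y ∈ c.support, G.Adj x y → s(x, y) ∈ c.edges := by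
    have hPQadj : ∀ y ∈ p.support, G.Adj u y → s(u, y) ∈ c.edges := by
      intro y hy hadj
      rcases hpQ y hy with rfl | rfl | hylow
      · rw [hcedges]; exact List.mem_cons_self
      · rw [hcedges, List.mem_cons, List.mem_append, List.mem_singleton]
        right; right
        exact Sym2.eq_swap
      · exact absurd hadj (hadj_low y hylow)
    intro x hx y hy hxy
    rcases hmem x hx with rfl | hxp
    · rcases hmem y hy with rfl | hyp
      · exact absurd hxy (G.irrefl)
      · exact hPQadj y hyp hxy
    · rcases hmem y hy with rfl | hyp
      · rw [Sym2.eq_swap]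
        exact hPQadj x hxp hxy.symm
      · rw [hcedges, List.mem_cons, List.mem_append]
        right; left
        exact hind x hxp y hyp hxy
  have hlen3 := hch u c hcyc hindc
  have hclen : c.length = p.length + 2 := by
    rw [hc, SimpleGraph.Walk.length_cons, hp2, SimpleGraph.Walk.length_append]
    simp
  -- p has length at least 2
  have hpne0 : p.length ≠ 0 := fun h => hvw (SimpleGraph.Walk.eq_of_length_eq_zero h)
  have hpne1 : p.length ≠ 1 := by
    intro h
    exact hnadj (p.adj_of_mem_edges (edge_of_length_one p h))
  omega
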